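/- Let Φ = Ā_R ⊙ Ξ be the elementwise product of the augmented adjacency matrix (with self-loops) restricted to rows indexed by a sampling set R with no repeated nodes, and an independent random matrix Ξ with entries drawn from a continuous (absolutely continuous) distribution. Then Φ has full row rank with probability 1. -/

import Mathlib

open MeasureTheory ProbabilityTheory MvPolynomial

lemma aux_measurable_eval_mv {ι : Type*} (p : MvPolynomial ι ℝ) :
    Measurable fun x : ι → ℝ => eval x p := by
  induction p using MvPolynomial.induction_on with
  | C c => simpa using (measurable_const : Measurable fun _ : ι → ℝ => c)
  | add p q hp' hq' => simp only [map_add]; exact hp'.add hq'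
  | mul_X p i hp' => simp only [map_mul, eval_X]; exact hp'.mul (measurable_pi_apply i)

lemma aux_poly_null_fin : ∀ (n : ℕ) (p : MvPolynomial (Fin n) ℝ), p ≠ 0 →
    ∀ (ν : Fin n → Measure ℝ), (∀ i, IsProbabilityMeasure (ν i)) →
    (∀ i, ν i ≪ volume) →
    Measure.pi ν {x | eval x p = 0} = 0 := by
  intro n
  induction n with
  | zero =>
    intro p hp ν _ _
    obtain ⟨c, rfl⟩ := MvPolynomial.C_surjective (Fin 0) p
    have hc : c ≠ 0 := fun h => hp (by simp [h])
    have : {x : Fin 0 → ℝ | eval x (C c) = 0} = ∅ := by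
      ext x; simp [hc]
    rw [this]; simp
  | succ n ih =>
    intro p hp ν hprob hac
    haveI := hprob
    set q := finSuccEquiv ℝ n p with hq
    have hq0 : q ≠ 0 := by
      simp only [hq, Ne, EmbeddingLike.map_eq_zero_iff]; exact hp
    have hlc : q.leadingCoeff ≠ 0 := Polynomial.leadingCoeff_ne_zero.2 hq0
    have hmeasS : MeasurableSet {x : Fin (n+1) → ℝ | eval x p = 0} :=
      (aux_measurable_eval_mv p) (measurableSet_singleton 0)
    have MP := measurePreserving_piFinSuccAbove ν 0
    set e := MeasurableEquiv.piFinSuccAbove (fun _ : Fin (n+1) => ℝ) 0 with he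
    have key : Measure.pi ν {x | eval x p = 0}
        = ((ν 0).prod (Measure.pi fun j => ν ((0 : Fin (n+1)).succAbove j)))
          (e.symm ⁻¹' {x | eval x p = 0}) := by
      rw [← MP.map_eq, Measure.map_apply e.measurable (e.symm.measurable hmeasS)]
      congr 1
      ext x
      simp
    rw [key]
    have hT : MeasurableSet (e.symm ⁻¹' {x | eval x p = 0}) := e.symm.measurable hmeasS
    rw [← Measure.prod_swap,
      Measure.map_apply measurable_swap hT,
      Measure.measure_prod_null (measurable_swap hT)]
    have htail : (Measure.pi fun j => ν ((0 : Fin (n+1)).succAbove j))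
        {y | eval y q.leadingCoeff = 0} = 0 := by
      have := ih q.leadingCoeff hlc (fun j => ν ((0 : Fin (n+1)).succAbove j))
        (fun j => hprob _) (fun j => hac _)
      exact this
    have htail' : ∀ᵐ y ∂(Measure.pi fun j => ν ((0 : Fin (n+1)).succAbove j)),
        eval y q.leadingCoeff ≠ 0 := by
      rw [ae_iff]
      simpa using htail
    filter_upwards [htail'] with y hy
    set r : Polynomial ℝ := q.map (eval y) with hr
    have hr0 : r ≠ 0 := by
      intro h
      apply hy
      have : r.coeff q.natDegree = eval y q.leadingCoeff := Polynomial.coeff_map _ _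
      rw [h] at this
      simpa using this.symm
    have hroots : {a : ℝ | Polynomial.eval a r = 0}.Finite :=
      Polynomial.finite_setOf_isRoot hr0
    have hvol : volume {a : ℝ | Polynomial.eval a r = 0} = 0 :=
      hroots.countable.measure_zero _
    have hnull : ν 0 {a : ℝ | Polynomial.eval a r = 0} = 0 := hac 0 hvol
    simp only [Pi.zero_apply]
    refine measure_mono_null ?_ hnull
    intro a ha
    simp only [Set.mem_preimage, Set.mem_setOf_eq] at ha ⊢
    have hsymm : e.symm (a, y) = Fin.cons a y := by
      ext i
      refine Fin.cases ?_ (fun j => ?_) i <;>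
        simp [he, MeasurableEquiv.piFinSuccAbove, Fin.insertNth_zero]
    rw [Prod.swap_prod_mk, hsymm] at ha
    rw [eval_eq_eval_mv_eval'] at ha
    exact ha

lemma aux_poly_null {ι : Type*} [Fintype ι] (p : MvPolynomial ι ℝ) (hp : p ≠ 0)
    (ν : ι → Measure ℝ) (hprob : ∀ i, IsProbabilityMeasure (ν i))
    (hac : ∀ i, ν i ≪ volume) :
    Measure.pi ν {x | eval x p = 0} = 0 := by
  haveI := hprob
  set e : Fin (Fintype.card ι) ≃ ι := (Fintype.equivFin ι).symm with he
  have MP := measurePreserving_piCongrLeft ν e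
  have hmeasS : MeasurableSet {x : ι → ℝ | eval x p = 0} :=
    aux_measurable_eval_mv p (measurableSet_singleton 0)
  set g := MeasurableEquiv.piCongrLeft (fun _ : ι => ℝ) e with hg
  have key : Measure.pi ν {x | eval x p = 0}
      = (Measure.pi fun i => ν (e i)) (g ⁻¹' {x | eval x p = 0}) := by
    rw [← MP.map_eq, Measure.map_apply g.measurable hmeasS]
  rw [key]
  have : g ⁻¹' {x | eval x p = 0}
      = {y : Fin (Fintype.card ι) → ℝ | eval y (rename e.symm p) = 0} := by
    ext y
    simp only [Set.mem_preimage, Set.mem_setOf_eq, eval_rename]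
    have : g y = y ∘ e.symm := by
      funext i
      simp [hg, MeasurableEquiv.piCongrLeft, Equiv.piCongrLeft]
    rw [this]
  rw [this]
  exact aux_poly_null_fin _ _
    (fun h => hp (rename_injective _ e.symm.injective (by rw [h, map_zero])))
    _ (fun i => hprob _) (fun i => hac _)

lemma aux_joint_law {ι Ω : Type*} [Fintype ι] [MeasurableSpace Ω] (μ : Measure Ω)
    [IsProbabilityMeasure μ] (X : ι → Ω → ℝ) (hX : ∀ i, Measurable (X i))
    (hindep : iIndepFun X μ) :
    Measure.map (fun ω i => X i ω) μ = Measure.pi fun i => μ.map (X i) := by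
  haveI : ∀ i, IsProbabilityMeasure (μ.map (X i)) :=
    fun i => Measure.isProbabilityMeasure_map (hX i).aemeasurable
  refine (Measure.pi_eq fun s hs => ?_).symm
  rw [Measure.map_apply (measurable_pi_lambda _ hX) (MeasurableSet.univ_pi hs)]
  have hpre : (fun ω i => X i ω) ⁻¹' Set.pi Set.univ s = ⋂ i ∈ Finset.univ, X i ⁻¹' s i := by
    ext ω; simp [Set.mem_pi]
  rw [hpre, hindep.measure_inter_preimage_eq_mul Finset.univ (fun i _ => hs i)]
  exact Finset.prod_congr rfl fun i _ =>
    (Measure.map_apply (hX i) (hs i)).symm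

lemma aux_rank_of_det_ne {V : Type*} [Fintype V] [DecidableEq V] (Nbar : V → Finset V)
    (R : Finset V) (x : ↥R × V → ℝ)
    (hdet : (Matrix.of fun i j : ↥R =>
      (if (j : V) ∈ Nbar i.1 then (1:ℝ) else 0) * x (i, (j : V))).det ≠ 0) :
    (Matrix.of fun (i : ↥R) (j : V) =>
      (if j ∈ Nbar i.1 then (1 : ℝ) else 0) * x (i, j)).rank = R.card := by
  set B := Matrix.of fun (i : ↥R) (j : V) =>
      (if j ∈ Nbar i.1 then (1 : ℝ) else 0) * x (i, j) with hB
  set N := Matrix.of fun i j : ↥R =>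
      (if (j : V) ∈ Nbar i.1 then (1:ℝ) else 0) * x (i, (j : V)) with hN
  have hNu : IsUnit N := (Matrix.isUnit_iff_isUnit_det N).2 (isUnit_iff_ne_zero.2 hdet)
  have hsurj : Function.Surjective B.mulVecLin := by
    intro y
    set w := N⁻¹.mulVec y with hw
    refine ⟨fun j => if h : j ∈ R then w ⟨j, h⟩ else 0, ?_⟩
    have key : B.mulVec (fun j => if h : j ∈ R then w ⟨j, h⟩ else 0) = y := by
      funext i
      have h1 : B.mulVec (fun j => if h : j ∈ R then w ⟨j, h⟩ else 0) i
          = ∑ j : V, B i j * (if h : j ∈ R then w ⟨j, h⟩ else 0) := rfl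
      rw [h1]
      rw [← Finset.sum_subset (Finset.subset_univ R)
        (fun j _ hj => by simp [hj])]
      rw [← Finset.sum_attach R (fun j => B i j * (if h : j ∈ R then w ⟨j, h⟩ else 0))]
      have h2 : ∀ j : ↥R, B i (j : V) * (if h : (j:V) ∈ R then w ⟨(j:V), h⟩ else 0)
          = N i j * w j := by
        intro j
        rw [dif_pos j.2]
        rfl
      rw [Finset.sum_congr rfl fun j _ => h2 j]
      have h3 : ∑ j ∈ R.attach, N i j * w j = N.mulVec w i := by
        rw [← Finset.univ_eq_attach]; rfl
      rw [h3, hw, Matrix.mulVec_mulVec, Matrix.mul_nonsing_inv N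
        (isUnit_iff_ne_zero.2 hdet), Matrix.one_mulVec]
    simpa [Matrix.mulVecLin_apply] using key
  have hrange : LinearMap.range B.mulVecLin = ⊤ := LinearMap.range_eq_top.2 hsurj
  rw [Matrix.rank, hrange, finrank_top, Module.finrank_pi, Fintype.card_coe]

/-- `Φ = Ā_R ⊙ Ξ`, the Hadamard product of the self-loop-augmented adjacency
pattern restricted to rows in a sampling set `R` of distinct nodes, with a
matrix `Ξ` of independent continuously distributed entries, has full row rank
with probability 1. -/
theorem stmt4 {V : Type*} [Fintype V] [DecidableEq V]
    {Ω : Type*} [MeasurableSpace Ω] (μ : Measure Ω) [IsProbabilityMeasure μ]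
    (Nbar : V → Finset V) (hself : ∀ i, i ∈ Nbar i)
    (R : Finset V)
    (Ξ : Ω → Matrix ↥R V ℝ)
    (hmeas : ∀ i j, Measurable fun ω => Ξ ω i j)
    (hindep : iIndepFun (fun (p : ↥R × V) ω => Ξ ω p.1 p.2) μ)
    (hcont : ∀ i j, Measure.map (fun ω => Ξ ω i j) μ ≪ volume) :
    ∀ᵐ ω ∂μ, (Matrix.of fun (i : ↥R) (j : V) =>
      (if j ∈ Nbar i.1 then (1 : ℝ) else 0) * Ξ ω i j).rank = R.card := by
  classical
  set P : MvPolynomial (↥R × V) ℝ :=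
    (Matrix.of fun i j : ↥R =>
      C (if (j : V) ∈ Nbar i.1 then (1:ℝ) else 0) * X (i, (j : V))).det with hP
  have heval : ∀ x : ↥R × V → ℝ, eval x P =
      (Matrix.of fun i j : ↥R =>
        (if (j : V) ∈ Nbar i.1 then (1:ℝ) else 0) * x (i, (j : V))).det := by
    intro x
    rw [hP, RingHom.map_det]
    congr 1
    ext i j
    simp only [RingHom.mapMatrix_apply, Matrix.map_apply, Matrix.of_apply, map_mul, eval_C,
      eval_X]
  have hp0 : P ≠ 0 := by
    intro h
    have h1 := heval (fun q => if q.2 = q.1.1 then 1 else 0)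
    rw [h, map_zero] at h1
    have h2 : (Matrix.of fun i j : ↥R =>
        (if (j : V) ∈ Nbar i.1 then (1:ℝ) else 0) *
          (fun q : ↥R × V => if q.2 = q.1.1 then (1:ℝ) else 0) (i, (j : V)))
        = (1 : Matrix ↥R ↥R ℝ) := by
      ext i j
      by_cases hij : j = i
      · subst hij
        simp [hself j.1, Matrix.one_apply_eq]
      · have : (j : V) ≠ (i : V) := fun hv => hij (Subtype.ext hv)
        simp only [Matrix.of_apply, if_neg this, mul_zero]
        exact (Matrix.one_apply_ne' hij).symm
    rw [h2, Matrix.det_one] at h1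
    exact one_ne_zero h1.symm
  haveI : ∀ q : ↥R × V, IsProbabilityMeasure (μ.map fun ω => Ξ ω q.1 q.2) :=
    fun q => Measure.isProbabilityMeasure_map (hmeas q.1 q.2).aemeasurable
  have hlaw := aux_joint_law μ (fun (q : ↥R × V) ω => Ξ ω q.1 q.2) (fun q => hmeas q.1 q.2) hindep
  have hnull := aux_poly_null P hp0 (fun q : ↥R × V => μ.map fun ω => Ξ ω q.1 q.2)
    (fun q => inferInstance) (fun q => hcont q.1 q.2)
  have hkey : μ {ω | eval (fun q : ↥R × V => Ξ ω q.1 q.2) P = 0} = 0 := by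
    have hmT : Measurable fun ω (q : ↥R × V) => Ξ ω q.1 q.2 :=
      measurable_pi_lambda _ fun q => hmeas q.1 q.2
    have h4 : Measure.map (fun ω (q : ↥R × V) => Ξ ω q.1 q.2) μ {x | eval x P = 0} = 0 := by
      rw [hlaw]; exact hnull
    have hsm : MeasurableSet {x : (↥R × V) → ℝ | eval x P = 0} :=
      aux_measurable_eval_mv P (measurableSet_singleton 0)
    rw [Measure.map_apply hmT hsm] at h4
    exact h4
  rw [ae_iff]
  refine measure_mono_null ?_ hkey
  intro ω hω
  simp only [Set.mem_setOf_eq] at hω ⊢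
  by_contra hne
  refine hω ?_
  have hdet : (Matrix.of fun i j : ↥R =>
      (if (j : V) ∈ Nbar i.1 then (1:ℝ) else 0) *
        (fun q : ↥R × V => Ξ ω q.1 q.2) (i, (j : V))).det ≠ 0 :=
    fun h0 => hne (((heval fun q => Ξ ω q.1 q.2)).trans h0)
  exact aux_rank_of_det_ne Nbar R (fun q => Ξ ω q.1 q.2) hdet
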